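/- Let G be a finite group of even order, let I ⊂ ℤG be the augmentation ideal and (I,2) = ker(ℤG → ℤ/2) the ideal generated by I and 2. Then the Tate homology group Ĥ_0(G; (ℤG/N) ⊗_ℤ (I,2)), where N = Σ_{g∈G} g, is cyclic of order 2, generated by the class of 1 ⊗ N. -/

import Mathlib

open TensorProduct

section Coinvariants
variable {G : Type*} [Group G] {V : Type*} [AddCommGroup V] [Module ℤ V]

/-- The norm map `v ↦ ∑ g • v` for a representation of a finite group. -/
noncomputable def normMap [Fintype G] (ρ : Representation ℤ G V) : V →ₗ[ℤ] V :=
  ∑ g : G, (ρ g : V →ₗ[ℤ] V)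

/-- The submodule generated by the elements `g • v - v`, so that the quotient of `V` by it is
the module of coinvariants `ℤ ⊗_{ℤG} V`. -/
def coinvRel (ρ : Representation ℤ G V) : Submodule ℤ V :=
  Submodule.span ℤ (Set.range fun p : G × V => ρ p.1 p.2 - p.2)

/-- The coinvariants `ℤ ⊗_{ℤG} V` of a representation. -/
abbrev Coinv (ρ : Representation ℤ G V) : Type _ := V ⧸ coinvRel ρ

lemma coinvRel_le [Fintype G] (ρ : Representation ℤ G V) :
    coinvRel ρ ≤ LinearMap.ker (normMap ρ) := by
  rw [coinvRel, Submodule.span_le]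
  rintro x ⟨⟨g, v⟩, rfl⟩
  have key : (normMap ρ) ((ρ g) v) = (normMap ρ) v := by
    simp only [normMap, LinearMap.sum_apply]
    calc ∑ h : G, (ρ h) ((ρ g) v)
        = ∑ h : G, (ρ (h * g)) v := by
          refine Finset.sum_congr rfl fun h _ => ?_
          rw [map_mul]; rfl
      _ = ∑ h : G, (ρ h) v :=
          Fintype.sum_bijective (· * g) (Group.mulRight_bijective g) _ _ fun x => rfl
  simp only [SetLike.mem_coe, LinearMap.mem_ker, map_sub, key, sub_self]

/-- The norm map `ℤ ⊗_{ℤG} V → V`, `1 ⊗ v ↦ ∑ g • v`, induced on the coinvariants.  Its kernel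
is the Tate homology group `Ĥ₀(G; V)` (the codomain restriction to the invariants `V^G` does not
change the kernel). -/
noncomputable def normBar [Fintype G] (ρ : Representation ℤ G V) :
    @LinearMap ℤ ℤ _ _ (RingHom.id ℤ) (Coinv ρ) V _ _ (Submodule.Quotient.module (coinvRel ρ)) _ :=
  Submodule.liftQ (coinvRel ρ) (normMap ρ) (coinvRel_le ρ)

end Coinvariants

section SubQuot
variable {G : Type*} [Group G] {V : Type*} [AddCommGroup V] [Module ℤ V]

/-- The restriction of a representation to an invariant submodule. -/
def subRep (ρ : Representation ℤ G V) (p : Submodule ℤ V)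
    (hp : ∀ g : G, ∀ x ∈ p, ρ g x ∈ p) : Representation ℤ G p where
  toFun g := (ρ g).restrict (hp g)
  map_one' := by
    ext x
    simp [LinearMap.restrict_apply]
  map_mul' g h := by
    ext x
    simp [LinearMap.restrict_apply, map_mul]

/-- The representation induced on the quotient by an invariant submodule. -/
noncomputable def quotRep (ρ : Representation ℤ G V) (p : Submodule ℤ V)
    (hp : ∀ g : G, ∀ x ∈ p, ρ g x ∈ p) : Representation ℤ G (V ⧸ p) where
  toFun g := Submodule.mapQ p p (ρ g) (hp g)
  map_one' := by
    apply LinearMap.ext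
    intro x
    obtain ⟨v, rfl⟩ := Submodule.Quotient.mk_surjective p x
    simp [Submodule.mapQ_apply]
  map_mul' g h := by
    apply LinearMap.ext
    intro x
    obtain ⟨v, rfl⟩ := Submodule.Quotient.mk_surjective p x
    simp [Submodule.mapQ_apply, map_mul]

end SubQuot

section GroupRing
variable (G : Type*) [Group G]

/-- The left regular representation of `G` on the group ring `ℤG`. -/
noncomputable def regRep : Representation ℤ G (MonoidAlgebra ℤ G) where
  toFun g := LinearMap.mulLeft ℤ (MonoidAlgebra.of ℤ G g)
  map_one' := by
    apply LinearMap.ext; intro x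
    simp [MonoidAlgebra.of_apply, ← MonoidAlgebra.one_def]
  map_mul' g h := by
    apply LinearMap.ext; intro x
    simp only [MonoidAlgebra.of_apply, LinearMap.mulLeft_apply, Module.End.mul_apply]
    rw [← mul_assoc, MonoidAlgebra.single_mul_single, mul_one]

/-- The augmentation map `ε : ℤG → ℤ`. -/
noncomputable def aug : MonoidAlgebra ℤ G →ₐ[ℤ] ℤ := MonoidAlgebra.lift ℤ ℤ G 1

/-- The augmentation ideal `I = ker(ε : ℤG → ℤ)`. -/
noncomputable def augI : Ideal (MonoidAlgebra ℤ G) := RingHom.ker (aug G).toRingHom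

/-- The mod 2 augmentation map `ℤG → ℤ/2`. -/
noncomputable def aug2 : MonoidAlgebra ℤ G →+* ZMod 2 :=
  (Int.castRingHom (ZMod 2)).comp (aug G).toRingHom

/-- The ideal `(I, 2) = ker(ℤG → ℤ/2)` generated by the augmentation ideal and `2`. -/
noncomputable def I2 : Ideal (MonoidAlgebra ℤ G) := RingHom.ker (aug2 G)

/-- The norm element `N = ∑_{g ∈ G} g ∈ ℤG`. -/
noncomputable def Nelt [Fintype G] : MonoidAlgebra ℤ G := ∑ g : G, MonoidAlgebra.of ℤ G g

/-- The (left) ideal of `ℤG` generated by the norm element `N`; the quotient by it is `ℤG/N`. -/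
noncomputable def NIdeal [Fintype G] : Ideal (MonoidAlgebra ℤ G) := Ideal.span {Nelt G}

/-- The left ideal `(N, 2)` of `ℤG` generated by the norm element `N` and `2`. -/
noncomputable def N2 [Fintype G] : Ideal (MonoidAlgebra ℤ G) := Ideal.span {Nelt G, 2}

lemma aug_single (g : G) : aug G (MonoidAlgebra.single g 1) = 1 := by
  simp [aug, MonoidAlgebra.lift_single]

lemma of_sub_one_mem_augI (g : G) :
    MonoidAlgebra.of ℤ G g - 1 ∈ (augI G).restrictScalars ℤ := by
  simp [augI, RingHom.mem_ker, map_sub, aug_single]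

lemma of_sub_one_mem_I2 (g : G) :
    MonoidAlgebra.of ℤ G g - 1 ∈ (I2 G).restrictScalars ℤ := by
  simp [I2, aug2, RingHom.mem_ker, map_sub, aug_single]

lemma two_mem_I2 : (2 : MonoidAlgebra ℤ G) ∈ (I2 G).restrictScalars ℤ := by
  have : (aug2 G) 2 = 2 := by simp [map_ofNat]
  simp [I2, RingHom.mem_ker, this]
  decide

lemma N_mem_I2 [Fintype G] (h : Even (Fintype.card G)) :
    Nelt G ∈ (I2 G).restrictScalars ℤ := by
  have : (aug2 G) (Nelt G) = (Fintype.card G : ZMod 2) := by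
    simp [Nelt, map_sum, aug2, aug_single]
  simp only [Submodule.restrictScalars_mem, I2, RingHom.mem_ker, this]
  rw [ZMod.natCast_eq_zero_iff]
  exact h.two_dvd

lemma N_mem_N2 [Fintype G] : Nelt G ∈ (N2 G).restrictScalars ℤ :=
  Ideal.subset_span (by simp)

lemma two_mem_N2 [Fintype G] : (2 : MonoidAlgebra ℤ G) ∈ (N2 G).restrictScalars ℤ :=
  Ideal.subset_span (by simp)

lemma ideal_invariant (J : Ideal (MonoidAlgebra ℤ G)) :
    ∀ g : G, ∀ x ∈ J.restrictScalars ℤ, (regRep G) g x ∈ J.restrictScalars ℤ := by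
  intro g x hx
  exact J.mul_mem_left _ hx

/-- A (left) ideal of `ℤG`, regarded as a representation of `G`. -/
noncomputable def idealRep (J : Ideal (MonoidAlgebra ℤ G)) :
    Representation ℤ G ↥(J.restrictScalars ℤ) :=
  subRep (regRep G) (J.restrictScalars ℤ) (ideal_invariant G J)

/-- The quotient `ℤG/N` of `ℤG` by the ideal generated by the norm element, as a
representation of `G`. -/
noncomputable def quotNRep [Fintype G] :
    Representation ℤ G (MonoidAlgebra ℤ G ⧸ (NIdeal G).restrictScalars ℤ) :=
  quotRep (regRep G) ((NIdeal G).restrictScalars ℤ) (ideal_invariant G (NIdeal G))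

/-- `2` as an element of `(I,2)`. -/
noncomputable def twoI2 : ↥((I2 G).restrictScalars ℤ) := ⟨2, two_mem_I2 G⟩

/-- `g - 1` as an element of `(I,2)`. -/
noncomputable def gm1 (g : G) : ↥((I2 G).restrictScalars ℤ) :=
  ⟨MonoidAlgebra.of ℤ G g - 1, of_sub_one_mem_I2 G g⟩

/-- `g - 1` as an element of the augmentation ideal `I`. -/
noncomputable def gm1I (g : G) : ↥((augI G).restrictScalars ℤ) :=
  ⟨MonoidAlgebra.of ℤ G g - 1, of_sub_one_mem_augI G g⟩

/-- The norm element as an element of `(I,2)` (for `G` of even order). -/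
noncomputable def NeltI2 [Fintype G] (h : Even (Fintype.card G)) :
    ↥((I2 G).restrictScalars ℤ) := ⟨Nelt G, N_mem_I2 G h⟩

/-- The norm element as an element of `(N,2)`. -/
noncomputable def NeltN2 [Fintype G] : ↥((N2 G).restrictScalars ℤ) := ⟨Nelt G, N_mem_N2 G⟩

end GroupRing

section Stmt6Aux

open MonoidAlgebra

variable (G : Type*) [Group G] [Fintype G]

lemma Nelt_apply (g : G) : (Nelt G).coeff g = 1 := by
  classical
  simp only [Nelt, MonoidAlgebra.of_apply]
  rw [MonoidAlgebra.coeff_sum, Finset.sum_apply']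
  simp [Finsupp.single_apply]

lemma of_mul_Nelt (g : G) : MonoidAlgebra.of ℤ G g * Nelt G = Nelt G := by
  classical
  simp only [Nelt, Finset.mul_sum, MonoidAlgebra.of_apply, MonoidAlgebra.single_mul_single,
    one_mul]
  exact Fintype.sum_bijective (g * ·) (Group.mulLeft_bijective g) _ _ fun x => rfl

lemma aug_single' (g : G) (c : ℤ) : aug G (MonoidAlgebra.single g c : MonoidAlgebra ℤ G) = c := by
  rw [show (MonoidAlgebra.single g c : MonoidAlgebra ℤ G) = c • MonoidAlgebra.single g 1 by
    rw [MonoidAlgebra.smul_single, smul_eq_mul, mul_one], map_zsmul]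
  rw [aug_single]
  simp

lemma mul_Nelt (s : MonoidAlgebra ℤ G) : s * Nelt G = aug G s • Nelt G := by
  classical
  induction s using MonoidAlgebra.induction_linear with
  | zero => simp
  | add f g hf hg => rw [add_mul, hf, hg, map_add, add_smul]
  | single g c =>
      rw [aug_single', show (MonoidAlgebra.single g c : MonoidAlgebra ℤ G)
        = c • MonoidAlgebra.of ℤ G g by
          simp [MonoidAlgebra.of_apply, MonoidAlgebra.smul_single], smul_mul_assoc, of_mul_Nelt]

lemma sum_apply_eq_aug (x : MonoidAlgebra ℤ G) : ∑ g : G, x.coeff g = aug G x := by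
  classical
  induction x using MonoidAlgebra.induction_linear with
  | zero => simp
  | add f g hf hg => simp [MonoidAlgebra.coeff_add, Finsupp.add_apply, Finset.sum_add_distrib, hf, hg, map_add]
  | single g c =>
      simp [MonoidAlgebra.coeff_single, Finsupp.single_apply, aug_single' G g c]
lemma aug_cast_eq_zero_of_mem_I2 (x : MonoidAlgebra ℤ G) (hx : x ∈ I2 G) :
    ((aug G x : ℤ) : ZMod 2) = 0 := hx

end Stmt6Aux

section Stmt6B
open MonoidAlgebra
set_option linter.unusedSectionVars false

variable (G : Type*) [Group G] [Fintype G]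

/-- `ℤ → ZMod 2` as a `ℤ`-linear map. -/
noncomputable def castLin6 : ℤ →ₗ[ℤ] ZMod 2 := (Int.castRingHom (ZMod 2)).toIntLinearMap

/-- Multiplication followed by reduction mod 2, as a bilinear map. -/
noncomputable def mulCast6 : ℤ →ₗ[ℤ] ℤ →ₗ[ℤ] ZMod 2 := (LinearMap.mul ℤ ℤ).compr₂ castLin6

/-- The pairing `(r, x) ↦ ∑ g, r(g) x(g) mod 2`. -/
noncomputable def beta6 : MonoidAlgebra ℤ G →ₗ[ℤ] ↥((I2 G).restrictScalars ℤ) →ₗ[ℤ] ZMod 2 :=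
  ∑ g : G, ((mulCast6.comp ((Finsupp.lapply g : (G →₀ ℤ) →ₗ[ℤ] ℤ).comp (MonoidAlgebra.coeffLinearEquiv ℤ).toLinearMap)).compl₂
    (((Finsupp.lapply g : (G →₀ ℤ) →ₗ[ℤ] ℤ).comp (MonoidAlgebra.coeffLinearEquiv ℤ).toLinearMap).comp ((I2 G).restrictScalars ℤ).subtype))

lemma beta6_apply (r : MonoidAlgebra ℤ G) (x : ↥((I2 G).restrictScalars ℤ)) :
    beta6 G r x = ∑ g : G, ((r.coeff g * (x : MonoidAlgebra ℤ G).coeff g : ℤ) : ZMod 2) := by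
  simp [beta6, mulCast6, castLin6]

lemma beta6_nelt (x : ↥((I2 G).restrictScalars ℤ)) : beta6 G (Nelt G) x = 0 := by
  rw [beta6_apply]
  simp only [Nelt_apply, one_mul]
  rw [← Int.cast_sum, sum_apply_eq_aug]
  exact aug_cast_eq_zero_of_mem_I2 G _ x.2

lemma beta6_nideal (r : MonoidAlgebra ℤ G) (hr : r ∈ (NIdeal G).restrictScalars ℤ) :
    beta6 G r = 0 := by
  rw [Submodule.restrictScalars_mem] at hr
  obtain ⟨s, rfl⟩ := Submodule.mem_span_singleton.mp hr
  ext x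
  rw [smul_eq_mul, mul_Nelt, map_smul]
  simp [beta6_nelt]

noncomputable def betaQ6 : (MonoidAlgebra ℤ G ⧸ (NIdeal G).restrictScalars ℤ) →ₗ[ℤ]
    ↥((I2 G).restrictScalars ℤ) →ₗ[ℤ] ZMod 2 :=
  Submodule.liftQ _ (beta6 G) (fun r hr => beta6_nideal G r hr)

noncomputable def psi6 : ((MonoidAlgebra ℤ G ⧸ (NIdeal G).restrictScalars ℤ)
    ⊗[ℤ] ↥((I2 G).restrictScalars ℤ)) →ₗ[ℤ] ZMod 2 :=
  TensorProduct.lift (betaQ6 G)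

lemma rho_tmul (g : G) (r : MonoidAlgebra ℤ G) (x : ↥((I2 G).restrictScalars ℤ)) :
    ((quotNRep G).tprod (idealRep G (I2 G))) g ((Submodule.Quotient.mk r) ⊗ₜ[ℤ] x) =
    (Submodule.Quotient.mk (MonoidAlgebra.of ℤ G g * r)) ⊗ₜ[ℤ]
      (⟨MonoidAlgebra.of ℤ G g * (x : MonoidAlgebra ℤ G),
        ideal_invariant G (I2 G) g x x.2⟩ : ↥((I2 G).restrictScalars ℤ)) := rfl

lemma psi6_tmul (r : MonoidAlgebra ℤ G) (x : ↥((I2 G).restrictScalars ℤ)) :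
    psi6 G ((Submodule.Quotient.mk r) ⊗ₜ[ℤ] x) = beta6 G r x := rfl

lemma of_mul_apply (g : G) (r : MonoidAlgebra ℤ G) (h : G) :
    (MonoidAlgebra.of ℤ G g * r).coeff h = r.coeff (g⁻¹ * h) := by
  rw [MonoidAlgebra.of_apply, MonoidAlgebra.coeff_single_mul_apply, one_mul]

lemma beta6_inv (g : G) (r : MonoidAlgebra ℤ G) (x : ↥((I2 G).restrictScalars ℤ)) :
    beta6 G (MonoidAlgebra.of ℤ G g * r)
      (⟨MonoidAlgebra.of ℤ G g * (x : MonoidAlgebra ℤ G),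
        ideal_invariant G (I2 G) g x x.2⟩ : ↥((I2 G).restrictScalars ℤ))
      = beta6 G r x := by
  rw [beta6_apply, beta6_apply]
  refine (Fintype.sum_bijective (g * ·) (Group.mulLeft_bijective g) _ _ fun h => ?_).symm
  simp [of_mul_apply, inv_mul_cancel_left]

lemma psi6_inv (g : G) (v : (MonoidAlgebra ℤ G ⧸ (NIdeal G).restrictScalars ℤ)
    ⊗[ℤ] ↥((I2 G).restrictScalars ℤ)) :
    psi6 G (((quotNRep G).tprod (idealRep G (I2 G))) g v) = psi6 G v := by
  induction v using TensorProduct.induction_on with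
  | zero => simp
  | add a b ha hb => simp only [map_add, ha, hb]
  | tmul a x =>
      obtain ⟨r, rfl⟩ := Submodule.Quotient.mk_surjective _ a
      rw [rho_tmul, psi6_tmul, psi6_tmul, beta6_inv]

lemma psi6_coinv : coinvRel ((quotNRep G).tprod (idealRep G (I2 G)))
    ≤ LinearMap.ker (psi6 G) := by
  rw [coinvRel]
  refine Submodule.span_le.mpr ?_
  rintro _ ⟨⟨g, v⟩, rfl⟩
  show psi6 G (((quotNRep G).tprod (idealRep G (I2 G))) g v - v) = 0
  rw [map_sub, psi6_inv, sub_self]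

noncomputable def psiBar6 : Coinv ((quotNRep G).tprod (idealRep G (I2 G))) →ₗ[ℤ] ZMod 2 :=
  Submodule.liftQ _ (psi6 G) (psi6_coinv G)

end Stmt6B

section Stmt6C
open MonoidAlgebra
set_option linter.unusedSectionVars false
set_option maxHeartbeats 1000000

variable (G : Type*) [Group G] [Fintype G]

/-- The functional `(r, x) ↦ (r(g) - r(1)) • x`. -/
noncomputable def delta6 (g : G) : MonoidAlgebra ℤ G →ₗ[ℤ]
    ↥((I2 G).restrictScalars ℤ) →ₗ[ℤ] ↥((I2 G).restrictScalars ℤ) :=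
  (LinearMap.lsmul ℤ ↥((I2 G).restrictScalars ℤ)).comp
    (((Finsupp.lapply g : (G →₀ ℤ) →ₗ[ℤ] ℤ).comp (MonoidAlgebra.coeffLinearEquiv ℤ).toLinearMap) - ((Finsupp.lapply 1 : (G →₀ ℤ) →ₗ[ℤ] ℤ).comp (MonoidAlgebra.coeffLinearEquiv ℤ).toLinearMap))

lemma delta6_apply (g : G) (r : MonoidAlgebra ℤ G) (x : ↥((I2 G).restrictScalars ℤ)) :
    delta6 G g r x = (r.coeff g - r.coeff 1) • x := rfl

lemma delta6_nideal (g : G) (r : MonoidAlgebra ℤ G)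
    (hr : r ∈ (NIdeal G).restrictScalars ℤ) : delta6 G g r = 0 := by
  rw [Submodule.restrictScalars_mem] at hr
  obtain ⟨s, rfl⟩ := Submodule.mem_span_singleton.mp hr
  refine LinearMap.ext fun x => ?_
  rw [delta6_apply, LinearMap.zero_apply, smul_eq_mul, mul_Nelt, MonoidAlgebra.coeff_smul, Finsupp.smul_apply,
    Finsupp.smul_apply, Nelt_apply, Nelt_apply, sub_self, zero_smul]

/-- The functional `D_g : (ℤG/N) ⊗ (I,2) → (I,2)`, `[r] ⊗ x ↦ (r(g) - r(1)) • x`. -/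
noncomputable def D6 (g : G) : ((MonoidAlgebra ℤ G ⧸ (NIdeal G).restrictScalars ℤ)
    ⊗[ℤ] ↥((I2 G).restrictScalars ℤ)) →ₗ[ℤ] ↥((I2 G).restrictScalars ℤ) :=
  TensorProduct.lift (Submodule.liftQ _ (delta6 G g) (fun r hr => delta6_nideal G g r hr))

lemma D6_tmul (g : G) (r : MonoidAlgebra ℤ G) (x : ↥((I2 G).restrictScalars ℤ)) :
    D6 G g ((Submodule.Quotient.mk r) ⊗ₜ[ℤ] x) = (r.coeff g - r.coeff 1) • x := rfl

lemma invariant_eq_smul_Nelt (x : MonoidAlgebra ℤ G)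
    (hx : ∀ g : G, MonoidAlgebra.of ℤ G g * x = x) : x = x.coeff 1 • Nelt G := by
  ext g
  have h1 : (MonoidAlgebra.of ℤ G g * x).coeff g = x.coeff g :=
    congrArg (fun z : MonoidAlgebra ℤ G => z.coeff g) (hx g)
  rw [of_mul_apply, inv_mul_cancel] at h1
  rw [MonoidAlgebra.coeff_smul, Finsupp.smul_apply, Nelt_apply, smul_eq_mul, mul_one, ← h1]

lemma mk_of_tmul_eq (g : G) (y : ↥((I2 G).restrictScalars ℤ)) :
    (Submodule.Quotient.mk ((Submodule.Quotient.mk (MonoidAlgebra.of ℤ G g)) ⊗ₜ[ℤ] y) :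
      Coinv ((quotNRep G).tprod (idealRep G (I2 G)))) =
    Submodule.Quotient.mk ((Submodule.Quotient.mk (1 : MonoidAlgebra ℤ G)) ⊗ₜ[ℤ]
      (⟨MonoidAlgebra.of ℤ G g⁻¹ * (y : MonoidAlgebra ℤ G),
        ideal_invariant G (I2 G) g⁻¹ y y.2⟩ : ↥((I2 G).restrictScalars ℤ))) := by
  rw [eq_comm, Submodule.Quotient.eq]
  have : ((Submodule.Quotient.mk (1 : MonoidAlgebra ℤ G)) ⊗ₜ[ℤ]
      (⟨MonoidAlgebra.of ℤ G g⁻¹ * (y : MonoidAlgebra ℤ G),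
        ideal_invariant G (I2 G) g⁻¹ y y.2⟩ : ↥((I2 G).restrictScalars ℤ)))
      = ((quotNRep G).tprod (idealRep G (I2 G))) g⁻¹
        ((Submodule.Quotient.mk (MonoidAlgebra.of ℤ G g)) ⊗ₜ[ℤ] y) := by
    rw [rho_tmul]
    congr 1
    rw [← map_mul, inv_mul_cancel, MonoidAlgebra.of_apply, MonoidAlgebra.one_def]
  rw [this]
  exact Submodule.subset_span ⟨(g⁻¹, (Submodule.Quotient.mk (MonoidAlgebra.of ℤ G g)) ⊗ₜ[ℤ] y),
    rfl⟩

lemma coinv_rep (v : (MonoidAlgebra ℤ G ⧸ (NIdeal G).restrictScalars ℤ)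
    ⊗[ℤ] ↥((I2 G).restrictScalars ℤ)) :
    ∃ x : ↥((I2 G).restrictScalars ℤ),
      (Submodule.Quotient.mk v : Coinv ((quotNRep G).tprod (idealRep G (I2 G)))) =
      Submodule.Quotient.mk ((Submodule.Quotient.mk (1 : MonoidAlgebra ℤ G)) ⊗ₜ[ℤ] x) := by
  induction v using TensorProduct.induction_on with
  | zero => exact ⟨0, by simp [TensorProduct.tmul_zero]⟩
  | add a b ha hb =>
      obtain ⟨x1, hx1⟩ := ha
      obtain ⟨x2, hx2⟩ := hb
      refine ⟨x1 + x2, ?_⟩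
      rw [Submodule.Quotient.mk_add, hx1, hx2, TensorProduct.tmul_add,
        Submodule.Quotient.mk_add]
  | tmul a y =>
      obtain ⟨r, rfl⟩ := Submodule.Quotient.mk_surjective _ a
      induction r using MonoidAlgebra.induction_linear with
      | zero => exact ⟨0, by simp [TensorProduct.tmul_zero,
          show (Submodule.Quotient.mk (0 : MonoidAlgebra ℤ G) :
            MonoidAlgebra ℤ G ⧸ (NIdeal G).restrictScalars ℤ) = 0 from rfl,
          TensorProduct.zero_tmul]⟩
      | add f g hf hg =>
          obtain ⟨x1, hx1⟩ := hf
          obtain ⟨x2, hx2⟩ := hg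
          refine ⟨x1 + x2, ?_⟩
          rw [Submodule.Quotient.mk_add (p := (NIdeal G).restrictScalars ℤ),
            TensorProduct.add_tmul, Submodule.Quotient.mk_add, hx1, hx2,
            TensorProduct.tmul_add, Submodule.Quotient.mk_add]
      | single g c =>
          refine ⟨c • (⟨MonoidAlgebra.of ℤ G g⁻¹ * (y : MonoidAlgebra ℤ G),
            ideal_invariant G (I2 G) g⁻¹ y y.2⟩ : ↥((I2 G).restrictScalars ℤ)), ?_⟩
          have hsc : (MonoidAlgebra.single g c : MonoidAlgebra ℤ G)
              = c • MonoidAlgebra.of ℤ G g := by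
            simp [MonoidAlgebra.of_apply, MonoidAlgebra.smul_single]
          rw [hsc, Submodule.Quotient.mk_smul, ← TensorProduct.smul_tmul',
            Submodule.Quotient.mk_smul, mk_of_tmul_eq, TensorProduct.tmul_smul,
            Submodule.Quotient.mk_smul]

end Stmt6C

section Stmt6D
open MonoidAlgebra
set_option linter.unusedSectionVars false
set_option maxHeartbeats 1000000

variable (G : Type*) [Group G] [Fintype G]

lemma mk_Nelt_eq_zero : (Submodule.Quotient.mk (Nelt G) :
    MonoidAlgebra ℤ G ⧸ (NIdeal G).restrictScalars ℤ) = 0 :=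
  (Submodule.Quotient.mk_eq_zero _).mpr
    (Submodule.restrictScalars_mem _ _ _ |>.mpr (Ideal.subset_span (Set.mem_singleton _)))

lemma mk_sum_of : ∑ g : G, (Submodule.Quotient.mk (MonoidAlgebra.of ℤ G g) :
    MonoidAlgebra ℤ G ⧸ (NIdeal G).restrictScalars ℤ) = Submodule.Quotient.mk (Nelt G) := by
  exact (map_sum (Submodule.mkQ ((NIdeal G).restrictScalars ℤ))
    (fun g : G => MonoidAlgebra.of ℤ G g) Finset.univ).symm

lemma sum_of_inv_eq_Nelt : ∑ g : G, MonoidAlgebra.of ℤ G g⁻¹ = Nelt G :=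
  (Fintype.sum_bijective (·⁻¹) inv_involutive.bijective _ _ fun _ => rfl).trans rfl

lemma normMap_one_tmul (x : ↥((I2 G).restrictScalars ℤ)) :
    normMap ((quotNRep G).tprod (idealRep G (I2 G)))
      ((Submodule.Quotient.mk (1 : MonoidAlgebra ℤ G)) ⊗ₜ[ℤ] x) =
    ∑ g : G, (Submodule.Quotient.mk (MonoidAlgebra.of ℤ G g)) ⊗ₜ[ℤ]
      (⟨MonoidAlgebra.of ℤ G g * (x : MonoidAlgebra ℤ G),
        ideal_invariant G (I2 G) g x x.2⟩ : ↥((I2 G).restrictScalars ℤ)) := by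
  rw [normMap, LinearMap.sum_apply]
  refine Finset.sum_congr rfl fun g _ => ?_
  rw [rho_tmul]
  congr 2
  rw [mul_one]

lemma norm_w_eq_zero (h : Even (Fintype.card G)) :
    normMap ((quotNRep G).tprod (idealRep G (I2 G)))
      ((Submodule.Quotient.mk (1 : MonoidAlgebra ℤ G)) ⊗ₜ[ℤ] NeltI2 G h) = 0 := by
  rw [normMap_one_tmul]
  have : ∀ g : G, ((Submodule.Quotient.mk (MonoidAlgebra.of ℤ G g)) ⊗ₜ[ℤ]
      (⟨MonoidAlgebra.of ℤ G g * ((NeltI2 G h : MonoidAlgebra ℤ G)),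
        ideal_invariant G (I2 G) g _ (NeltI2 G h).2⟩ : ↥((I2 G).restrictScalars ℤ))
      : (MonoidAlgebra ℤ G ⧸ (NIdeal G).restrictScalars ℤ)
        ⊗[ℤ] ↥((I2 G).restrictScalars ℤ))
      = (Submodule.Quotient.mk (MonoidAlgebra.of ℤ G g)) ⊗ₜ[ℤ] NeltI2 G h := by
    intro g
    congr 1
    exact Subtype.ext (of_mul_Nelt G g)
  rw [Finset.sum_congr rfl fun g _ => this g, ← TensorProduct.sum_tmul, mk_sum_of,
    mk_Nelt_eq_zero, TensorProduct.zero_tmul]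

lemma two_of_mem (g : G) : (2:ℤ) • MonoidAlgebra.of ℤ G g ∈ (I2 G).restrictScalars ℤ := by
  rw [Submodule.restrictScalars_mem, show (2:ℤ) • MonoidAlgebra.of ℤ G g
    = MonoidAlgebra.of ℤ G g * 2 by rw [two_zsmul, mul_two]]
  exact Ideal.mul_mem_left _ _ (two_mem_I2 G)

lemma two_one_mem : (2:ℤ) • (1 : MonoidAlgebra ℤ G) ∈ (I2 G).restrictScalars ℤ := by
  have := two_of_mem G 1
  rwa [map_one] at this

lemma mk_sum_of_inv : ∑ g : G, (Submodule.Quotient.mk (MonoidAlgebra.of ℤ G g⁻¹) :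
    MonoidAlgebra ℤ G ⧸ (NIdeal G).restrictScalars ℤ) = 0 := by
  rw [← mk_Nelt_eq_zero G]
  exact (map_sum (Submodule.mkQ ((NIdeal G).restrictScalars ℤ))
    (fun g : G => MonoidAlgebra.of ℤ G g⁻¹) Finset.univ).symm.trans
    (congrArg _ (sum_of_inv_eq_Nelt G))

/-- Auxiliary element `1 ⊗ 2g`. -/
noncomputable def u6 (g : G) : (MonoidAlgebra ℤ G ⧸ (NIdeal G).restrictScalars ℤ)
    ⊗[ℤ] ↥((I2 G).restrictScalars ℤ) :=
  (Submodule.Quotient.mk (1 : MonoidAlgebra ℤ G)) ⊗ₜ[ℤ]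
    (⟨(2:ℤ) • MonoidAlgebra.of ℤ G g, two_of_mem G g⟩ : ↥((I2 G).restrictScalars ℤ))

lemma one_tmul_two_Nelt_mem (h : Even (Fintype.card G)) :
    ((Submodule.Quotient.mk (1 : MonoidAlgebra ℤ G)) ⊗ₜ[ℤ] ((2:ℤ) • NeltI2 G h))
      ∈ coinvRel ((quotNRep G).tprod (idealRep G (I2 G))) := by
  classical
  set ρ := (quotNRep G).tprod (idealRep G (I2 G)) with hρ
  have hT : (∑ g : G, (ρ g⁻¹ (u6 G g) - u6 G g)) ∈ coinvRel ρ :=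
    Submodule.sum_mem _ fun g _ => Submodule.subset_span ⟨(g⁻¹, u6 G g), rfl⟩
  have hval : ∀ g : G, MonoidAlgebra.of ℤ G g⁻¹ * ((2:ℤ) • MonoidAlgebra.of ℤ G g)
      = (2:ℤ) • (1 : MonoidAlgebra ℤ G) := by
    intro g
    rw [mul_smul_comm, ← map_mul, inv_mul_cancel, map_one]
  have hrho : ∀ g : G, ρ g⁻¹ (u6 G g) =
      (Submodule.Quotient.mk (MonoidAlgebra.of ℤ G g⁻¹)) ⊗ₜ[ℤ]
      (⟨(2:ℤ) • (1 : MonoidAlgebra ℤ G), two_one_mem G⟩ : ↥((I2 G).restrictScalars ℤ)) := by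
    intro g
    rw [hρ]
    simp only [u6]
    rw [rho_tmul]
    congr 1
    · rw [mul_one]
    · exact Subtype.ext (hval g)
  have hsum1 : ∑ g : G, ρ g⁻¹ (u6 G g) = 0 := by
    rw [Finset.sum_congr rfl fun g _ => hrho g, ← TensorProduct.sum_tmul, mk_sum_of_inv,
      TensorProduct.zero_tmul]
  have hsum2 : ∑ g : G, u6 G g = (Submodule.Quotient.mk (1 : MonoidAlgebra ℤ G)) ⊗ₜ[ℤ]
      ((2:ℤ) • NeltI2 G h) := by
    simp only [u6]
    rw [← TensorProduct.tmul_sum]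
    congr 1
    refine Subtype.ext ?_
    push_cast [AddSubmonoidClass.coe_finset_sum]
    rw [← Finset.smul_sum]
    rfl
  have hT2 : (∑ g : G, (ρ g⁻¹ (u6 G g) - u6 G g)) =
      -((Submodule.Quotient.mk (1 : MonoidAlgebra ℤ G)) ⊗ₜ[ℤ] ((2:ℤ) • NeltI2 G h)) := by
    rw [Finset.sum_sub_distrib, hsum1, hsum2, zero_sub]
  rw [hT2] at hT
  simpa using Submodule.neg_mem _ hT

end Stmt6D

section Stmt6E
open MonoidAlgebra
set_option linter.unusedSectionVars false
set_option maxHeartbeats 1000000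

variable (G : Type*) [Group G] [Fintype G]

lemma psiBar6_w (h : Even (Fintype.card G)) :
    psiBar6 G (Submodule.Quotient.mk
      ((Submodule.Quotient.mk (1 : MonoidAlgebra ℤ G)) ⊗ₜ[ℤ] NeltI2 G h)) = 1 := by
  classical
  show psi6 G ((Submodule.Quotient.mk (1 : MonoidAlgebra ℤ G)) ⊗ₜ[ℤ] NeltI2 G h) = 1
  rw [psi6_tmul, beta6_apply]
  have key : ∀ g : G, ((1 : MonoidAlgebra ℤ G).coeff g
      * (NeltI2 G h : MonoidAlgebra ℤ G).coeff g : ℤ) = if (1:G) = g then 1 else 0 := by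
    intro g
    rw [show (NeltI2 G h : MonoidAlgebra ℤ G) = Nelt G from rfl, Nelt_apply, mul_one,
      MonoidAlgebra.one_def, MonoidAlgebra.coeff_single, Finsupp.single_apply]
  rw [Finset.sum_congr rfl fun g _ => by rw [key g]]
  simp [apply_ite (Int.cast : ℤ → ZMod 2)]

end Stmt6E

set_option maxHeartbeats 2000000 in
/-- For a finite group `G` of even order, the Tate homology group
`Ĥ₀(G; (ℤG/N) ⊗_ℤ (I,2))` (the kernel of the norm map on the coinvariants, with the diagonal
`G`-action on the tensor product) is cyclic of order `2`, generated by the class of `1 ⊗ N`. -/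
theorem stmt6 {G : Type*} [Group G] [Fintype G] (h : Even (Fintype.card G)) :
    Nonempty (↥(LinearMap.ker (normBar ((quotNRep G).tprod (idealRep G (I2 G))))) ≃+ ZMod 2) ∧
    LinearMap.ker (normBar ((quotNRep G).tprod (idealRep G (I2 G)))) =
      Submodule.span ℤ
        {(Submodule.Quotient.mk
            ((Submodule.Quotient.mk (1 : MonoidAlgebra ℤ G)) ⊗ₜ[ℤ] (NeltI2 G h)) :
          Coinv ((quotNRep G).tprod (idealRep G (I2 G))))} := by
  classical
  set ρ := (quotNRep G).tprod (idealRep G (I2 G)) with hρ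
  set w : Coinv ρ := (Submodule.Quotient.mk
      ((Submodule.Quotient.mk (1 : MonoidAlgebra ℤ G)) ⊗ₜ[ℤ] (NeltI2 G h))) with hwdef
  have hwker : w ∈ LinearMap.ker (normBar ρ) := by
    rw [LinearMap.mem_ker]
    exact norm_w_eq_zero G h
  have hw2 : (2:ℤ) • w = 0 := by
    rw [two_smul, hwdef, ← Submodule.Quotient.mk_add, Submodule.Quotient.mk_eq_zero,
      ← TensorProduct.tmul_add, hρ]
    have := one_tmul_two_Nelt_mem G h
    rwa [two_smul] at this
  have hspan : LinearMap.ker (normBar ρ) = Submodule.span ℤ {w} := by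
    apply le_antisymm
    · intro c hc
      obtain ⟨v, rfl⟩ := Submodule.Quotient.mk_surjective _ c
      obtain ⟨x, hx⟩ := coinv_rep G v
      have hc2 : normMap ρ ((Submodule.Quotient.mk (1 : MonoidAlgebra ℤ G)) ⊗ₜ[ℤ] x) = 0 := by
        have h5 : (Submodule.Quotient.mk ((Submodule.Quotient.mk (1 : MonoidAlgebra ℤ G))
            ⊗ₜ[ℤ] x) : Coinv ρ) ∈ LinearMap.ker (normBar ρ) := by
          rw [← hx]; exact hc
        exact h5
      rw [hρ, normMap_one_tmul] at hc2
      have hinv : ∀ g0 : G, MonoidAlgebra.of ℤ G g0 * (x : MonoidAlgebra ℤ G) = x := by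
        intro g0
        have h0 := congrArg (D6 G g0) hc2
        rw [map_sum, map_zero] at h0
        have h1 : ∀ g : G, D6 G g0 ((Submodule.Quotient.mk (MonoidAlgebra.of ℤ G g)) ⊗ₜ[ℤ]
            (⟨MonoidAlgebra.of ℤ G g * (x : MonoidAlgebra ℤ G),
              ideal_invariant G (I2 G) g x x.2⟩ : ↥((I2 G).restrictScalars ℤ)))
            = ((if g = g0 then (1:ℤ) else 0) - (if g = 1 then (1:ℤ) else 0)) •
              (⟨MonoidAlgebra.of ℤ G g * (x : MonoidAlgebra ℤ G),
                ideal_invariant G (I2 G) g x x.2⟩ : ↥((I2 G).restrictScalars ℤ)) := by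
          intro g
          rw [D6_tmul]
          congr 2 <;> rw [MonoidAlgebra.of_apply, MonoidAlgebra.coeff_single, Finsupp.single_apply]
        rw [Finset.sum_congr rfl fun g _ => h1 g] at h0
        simp only [sub_smul, ite_smul, one_smul, zero_smul, Finset.sum_sub_distrib,
          Finset.sum_ite_eq', Finset.mem_univ, if_true] at h0
        have h2 := sub_eq_zero.mp h0
        have h3 := congrArg Subtype.val h2
        simpa [map_one] using h3
      have hx2 : x = ((x : MonoidAlgebra ℤ G).coeff 1) • NeltI2 G h :=
        Subtype.ext (invariant_eq_smul_Nelt G _ hinv)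
      rw [hx, hx2, TensorProduct.tmul_smul, Submodule.Quotient.mk_smul]
      exact Submodule.smul_mem _ _ (Submodule.mem_span_singleton_self _)
    · rw [Submodule.span_le, Set.singleton_subset_iff]
      exact hwker
  refine ⟨?_, hspan⟩
  set K := LinearMap.ker (normBar ρ) with hK
  let φ : K →+ ZMod 2 := (psiBar6 G).toAddMonoidHom.comp (K.subtype).toAddMonoidHom
  have hφ : ∀ a : K, φ a = psiBar6 G (a : Coinv ρ) := fun a => rfl
  have hφw : φ ⟨w, hwker⟩ = 1 := by
    rw [hφ]
    exact psiBar6_w G h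
  have hinj : Function.Injective φ := by
    rw [injective_iff_map_eq_zero]
    intro a ha
    have hmem : (a : Coinv ρ) ∈ Submodule.span ℤ {w} := by rw [← hspan]; exact a.2
    obtain ⟨k, hk⟩ := Submodule.mem_span_singleton.mp hmem
    have hval : φ a = (k : ZMod 2) := by
      rw [hφ, ← hk, map_smul, show psiBar6 G w = 1 from psiBar6_w G h, zsmul_eq_mul, mul_one]
    have hcast : ((k : ℤ) : ZMod 2) = 0 := by rw [← hval]; exact ha
    obtain ⟨m, hm⟩ := (ZMod.intCast_zmod_eq_zero_iff_dvd k 2).mp hcast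
    have h2w : (((2:ℕ):ℤ)) • w = 0 := by
      rw [show (((2:ℕ):ℤ)) = (2:ℤ) from by norm_num]; exact hw2
    apply Subtype.ext
    rw [show ((0 : K) : Coinv ρ) = 0 from rfl, ← hk, hm, mul_comm, mul_smul, h2w, smul_zero]
  have hsurj : Function.Surjective φ := by
    intro z
    have hz : z = 0 ∨ z = 1 := by revert z; decide
    rcases hz with rfl | rfl
    · exact ⟨0, map_zero φ⟩
    · exact ⟨⟨w, hwker⟩, hφw⟩
  exact ⟨AddEquiv.ofBijective φ ⟨hinj, hsurj⟩⟩
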